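/- Collapsing the simulated social surplus into a single LP: given simulated draws (ε_i)_{i∈I} and (η_j)_{j∈J}, the two-level optimization W(Φ) = max over aggregate matchings μ ≥ 0 with Σ_y μ_{xy} ≤ n_x and Σ_x μ_{xy} ≤ m_y of [Σ_{xy} μ_{xy} Φ_{xy} + Ê(μ)], where Ê(μ) is the simulated entropy (the maximum over individual assignments π consistent with μ of the total idiosyncratic utility), equals the value of the single type-aggregated optimal assignment LP: max Σ_i [π_{i0} ε_{i0} + Σ_y π_{iy} α_{iy}] + Σ_j [π_{0j} η_{0j} + Σ_x π_{xj} γ_{xj}] subject to π_{i0} + Σ_y π_{iy} = 1, π_{0j} + Σ_x π_{xj} = 1, Σ_{i: x_i=x} π_{iy} = Σ_{j: y_j=y} π_{xj}, where α_{iy} = Φ_{x_i y}/2 + ε_{iy} and γ_{xj} = Φ_{x y_j}/2 + η_{xj}. -/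
import Mathlib


open Finset

lemma stmt12_aux {I X Y : Type*} [Fintype I] [Fintype X] [Fintype Y] [DecidableEq X]
    (xm : I → X) (f : I → Y → ℝ) (Φ : X → Y → ℝ) :
    ∑ i, ∑ y, f i y * Φ (xm i) y
      = ∑ x, ∑ y, (∑ i ∈ univ.filter (fun i => xm i = x), f i y) * Φ x y := by
  rw [← Finset.sum_fiberwise univ xm (fun i => ∑ y, f i y * Φ (xm i) y)]
  refine Finset.sum_congr rfl fun x _ => ?_
  rw [Finset.sum_comm]
  refine Finset.sum_congr rfl fun y _ => ?_
  rw [Finset.sum_mul]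
  refine Finset.sum_congr rfl fun i hi => ?_
  have : xm i = x := (Finset.mem_filter.mp hi).2
  rw [this]

lemma stmt12_aux2 {J X Y : Type*} [Fintype J] [Fintype X] [Fintype Y] [DecidableEq Y]
    (ym : J → Y) (g : X → J → ℝ) (Φ : X → Y → ℝ) :
    ∑ j, ∑ x, g x j * Φ x (ym j)
      = ∑ x, ∑ y, (∑ j ∈ univ.filter (fun j => ym j = y), g x j) * Φ x y := by
  rw [Finset.sum_comm]
  refine Finset.sum_congr rfl fun x _ => ?_
  rw [← Finset.sum_fiberwise univ ym (fun j => g x j * Φ x (ym j))]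
  refine Finset.sum_congr rfl fun y _ => ?_
  rw [Finset.sum_mul]
  refine Finset.sum_congr rfl fun j hj => ?_
  have : ym j = y := (Finset.mem_filter.mp hj).2
  rw [this]

/-- The two-level optimization defining the simulated social surplus
(outer maximization over aggregate matchings μ of ⟨μ, Φ⟩ plus the simulated
entropy, an inner LP) has the same value as the single type-aggregated optimal
assignment LP. -/
theorem stmt12
    {I J X Y : Type*} [Fintype I] [Fintype J] [Fintype X] [Fintype Y]
    [DecidableEq X] [DecidableEq Y]
    (xm : I → X) (ym : J → Y)
    (Φ : X → Y → ℝ) (ε : I → Y → ℝ) (ε0 : I → ℝ)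
    (η : X → J → ℝ) (η0 : J → ℝ) :
    sSup {r : ℝ | ∃ (μ : X → Y → ℝ)
        (a : I → Y → ℝ) (a0 : I → ℝ) (b : X → J → ℝ) (b0 : J → ℝ),
      (∀ x y, 0 ≤ μ x y) ∧
      (∀ x, ∑ y, μ x y ≤ ((univ.filter (fun i => xm i = x)).card : ℝ)) ∧
      (∀ y, ∑ x, μ x y ≤ ((univ.filter (fun j => ym j = y)).card : ℝ)) ∧
      (∀ i y, 0 ≤ a i y) ∧ (∀ i, 0 ≤ a0 i) ∧ (∀ x j, 0 ≤ b x j) ∧ (∀ j, 0 ≤ b0 j) ∧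
      (∀ i, a0 i + ∑ y, a i y = 1) ∧ (∀ j, b0 j + ∑ x, b x j = 1) ∧
      (∀ x y, ∑ i ∈ univ.filter (fun i => xm i = x), a i y = μ x y) ∧
      (∀ x y, ∑ j ∈ univ.filter (fun j => ym j = y), b x j = μ x y) ∧
      r = ∑ x, ∑ y, μ x y * Φ x y
        + (∑ i, (a0 i * ε0 i + ∑ y, a i y * ε i y)
          + ∑ j, (b0 j * η0 j + ∑ x, b x j * η x j))}
    =
    sSup {r : ℝ | ∃ (a : I → Y → ℝ) (a0 : I → ℝ) (b : X → J → ℝ) (b0 : J → ℝ),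
      (∀ i y, 0 ≤ a i y) ∧ (∀ i, 0 ≤ a0 i) ∧ (∀ x j, 0 ≤ b x j) ∧ (∀ j, 0 ≤ b0 j) ∧
      (∀ i, a0 i + ∑ y, a i y = 1) ∧ (∀ j, b0 j + ∑ x, b x j = 1) ∧
      (∀ x y, ∑ i ∈ univ.filter (fun i => xm i = x), a i y
        = ∑ j ∈ univ.filter (fun j => ym j = y), b x j) ∧
      r = ∑ i, (a0 i * ε0 i + ∑ y, a i y * (Φ (xm i) y / 2 + ε i y))
        + ∑ j, (b0 j * η0 j + ∑ x, b x j * (Φ x (ym j) / 2 + η x j))} := by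
  congr 1
  ext r
  constructor
  · rintro ⟨μ, a, a0, b, b0, hμ0, hμx, hμy, ha, ha0, hb, hb0, hsa, hsb, hμa, hμb, hr⟩
    refine ⟨a, a0, b, b0, ha, ha0, hb, hb0, hsa, hsb, fun x y => by rw [hμa, hμb], ?_⟩
    have key : ∑ x, ∑ y, μ x y * Φ x y
        = (∑ i, ∑ y, a i y * (Φ (xm i) y / 2))
          + ∑ j, ∑ x, b x j * (Φ x (ym j) / 2) := by
      have h1 := stmt12_aux xm a (fun x y => Φ x y / 2)
      have h2 := stmt12_aux2 ym b (fun x y => Φ x y / 2)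
      rw [h1, h2]
      rw [← Finset.sum_add_distrib]
      refine Finset.sum_congr rfl fun x _ => ?_
      rw [← Finset.sum_add_distrib]
      refine Finset.sum_congr rfl fun y _ => ?_
      rw [hμa, hμb]
      ring
    rw [hr, key]
    rw [Finset.sum_add_distrib (f := fun i => a0 i * ε0 i),
        Finset.sum_add_distrib (f := fun j => b0 j * η0 j)]
    have ea : ∀ i, ∑ y, a i y * (Φ (xm i) y / 2 + ε i y)
        = (∑ y, a i y * (Φ (xm i) y / 2)) + ∑ y, a i y * ε i y := by
      intro i
      rw [← Finset.sum_add_distrib]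
      exact Finset.sum_congr rfl fun y _ => by ring
    have eb : ∀ j, ∑ x, b x j * (Φ x (ym j) / 2 + η x j)
        = (∑ x, b x j * (Φ x (ym j) / 2)) + ∑ x, b x j * η x j := by
      intro j
      rw [← Finset.sum_add_distrib]
      exact Finset.sum_congr rfl fun x _ => by ring
    simp_rw [ea, eb]
    rw [Finset.sum_add_distrib, Finset.sum_add_distrib, Finset.sum_add_distrib,
        Finset.sum_add_distrib]
    ring
  · rintro ⟨a, a0, b, b0, ha, ha0, hb, hb0, hsa, hsb, hcons, hr⟩
    set μ : X → Y → ℝ := fun x y => ∑ i ∈ univ.filter (fun i => xm i = x), a i y with hμdef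
    have hμa : ∀ x y, ∑ i ∈ univ.filter (fun i => xm i = x), a i y = μ x y := fun _ _ => rfl
    have hμb : ∀ x y, ∑ j ∈ univ.filter (fun j => ym j = y), b x j = μ x y :=
      fun x y => (hcons x y).symm
    refine ⟨μ, a, a0, b, b0, ?_, ?_, ?_, ha, ha0, hb, hb0, hsa, hsb, hμa, hμb, ?_⟩
    · exact fun x y => Finset.sum_nonneg fun i _ => ha i y
    · intro x
      rw [Finset.sum_comm]
      calc ∑ i ∈ univ.filter (fun i => xm i = x), ∑ y, a i y
          ≤ ∑ _i ∈ univ.filter (fun i => xm i = x), (1 : ℝ) := by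
            refine Finset.sum_le_sum fun i _ => ?_
            have := hsa i
            nlinarith [ha0 i]
        _ = _ := by simp
    · intro y
      have : ∀ x, μ x y = ∑ j ∈ univ.filter (fun j => ym j = y), b x j :=
        fun x => (hμb x y).symm
      simp_rw [this]
      rw [Finset.sum_comm]
      calc ∑ j ∈ univ.filter (fun j => ym j = y), ∑ x, b x j
          ≤ ∑ _j ∈ univ.filter (fun j => ym j = y), (1 : ℝ) := by
            refine Finset.sum_le_sum fun j _ => ?_
            have := hsb j
            nlinarith [hb0 j]
        _ = _ := by simp
    · have key : ∑ x, ∑ y, μ x y * Φ x y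
          = (∑ i, ∑ y, a i y * (Φ (xm i) y / 2))
            + ∑ j, ∑ x, b x j * (Φ x (ym j) / 2) := by
        have h1 := stmt12_aux xm a (fun x y => Φ x y / 2)
        have h2 := stmt12_aux2 ym b (fun x y => Φ x y / 2)
        rw [h1, h2]
        rw [← Finset.sum_add_distrib]
        refine Finset.sum_congr rfl fun x _ => ?_
        rw [← Finset.sum_add_distrib]
        refine Finset.sum_congr rfl fun y _ => ?_
        rw [hμa, hμb]
        ring
      rw [hr, key]
      have ea : ∀ i, ∑ y, a i y * (Φ (xm i) y / 2 + ε i y)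
          = (∑ y, a i y * (Φ (xm i) y / 2)) + ∑ y, a i y * ε i y := by
        intro i
        rw [← Finset.sum_add_distrib]
        exact Finset.sum_congr rfl fun y _ => by ring
      have eb : ∀ j, ∑ x, b x j * (Φ x (ym j) / 2 + η x j)
          = (∑ x, b x j * (Φ x (ym j) / 2)) + ∑ x, b x j * η x j := by
        intro j
        rw [← Finset.sum_add_distrib]
        exact Finset.sum_congr rfl fun x _ => by ring
      simp_rw [ea, eb]
      rw [Finset.sum_add_distrib (f := fun i => a0 i * ε0 i),
          Finset.sum_add_distrib (f := fun j => b0 j * η0 j)]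
      rw [Finset.sum_add_distrib, Finset.sum_add_distrib, Finset.sum_add_distrib,
          Finset.sum_add_distrib]
      ring
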